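/- Let n ≥ 1 be an integer, ε > 0, and R ≥ 0. Then the integral over the closed Euclidean ball {x ∈ ℝ^n : ‖x‖ ≤ R} (with Lebesgue measure) of c_n^ε·exp(−ε‖x‖), where c_n^ε = ε^n · Γ(n/2+1) / (Γ(n) · n · π^{n/2}), equals 1 − exp(−ε·R) · Σ_{k=0}^{n−1} (ε·R)^k / k!. That is, the probability that a vector sampled from the n-dimensional Laplacian with parameter ε lies within Euclidean distance R of the origin is 1 − e^{−εR}·e_{n−1}(εR). -/

import Mathlib

open MeasureTheory Real Finset

/-- The normalising constant of the `n`-dimensional Laplacian density with parameter `ε`. -/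
noncomputable def lapConst (n : ℕ) (ε : ℝ) : ℝ :=
  ε ^ n * Real.Gamma ((n : ℝ) / 2 + 1) / (Real.Gamma n * n * Real.pi ^ ((n : ℝ) / 2))

lemma lap_deriv (n : ℕ) (hn : 1 ≤ n) (ε : ℝ) (x : ℝ) :
    HasDerivAt (fun x : ℝ => Real.exp (-ε * x) * ∑ k ∈ Finset.range n, (ε * x) ^ k / (Nat.factorial k))
      (-ε * Real.exp (-ε * x) * ((ε * x) ^ (n - 1) / (Nat.factorial (n - 1)))) x := by
  obtain ⟨m, rfl⟩ := Nat.exists_eq_add_of_le hn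
  have hE : HasDerivAt (fun x : ℝ => Real.exp (-ε * x)) (-ε * Real.exp (-ε * x)) x := by
    simpa [mul_comm] using ((hasDerivAt_id x).const_mul (-ε)).exp
  have hS : HasDerivAt (fun x : ℝ => ∑ k ∈ Finset.range (1 + m), (ε * x) ^ k / (Nat.factorial k))
      (∑ k ∈ Finset.range (1 + m), (k : ℝ) * (ε * x) ^ (k - 1) * ε / (Nat.factorial k)) x := by
    apply HasDerivAt.fun_sum
    intro k _
    have h1 : HasDerivAt (fun x : ℝ => (ε * x) ^ k) ((k : ℝ) * (ε * x) ^ (k - 1) * ε) x := by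
      have := (hasDerivAt_pow k (ε * x)).comp x ((hasDerivAt_id x).const_mul ε)
      simpa [mul_comm, mul_assoc, Function.comp_def] using this
    simpa [div_eq_mul_inv] using h1.mul_const ((Nat.factorial k : ℝ)⁻¹)
  have hDval : (∑ k ∈ Finset.range (1 + m), (k : ℝ) * (ε * x) ^ (k - 1) * ε / (Nat.factorial k))
      = ε * ∑ k ∈ Finset.range m, (ε * x) ^ k / (Nat.factorial k) := by
    rw [add_comm 1 m, Finset.sum_range_succ']
    simp only [Nat.cast_zero, zero_mul, pow_zero, Nat.factorial_zero, Nat.cast_one, zero_div,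
      add_zero, zero_mul, Nat.cast_add]
    rw [Finset.mul_sum]
    refine Finset.sum_congr rfl fun k _ => ?_
    have : (Nat.factorial (k + 1) : ℝ) = (k + 1) * Nat.factorial k := by
      push_cast [Nat.factorial_succ]; ring
    rw [this]
    simp only [Nat.add_sub_cancel]
    field_simp
  have := hE.mul hS
  convert this using 1
  · rfl
  · rfl
  · rfl
  rw [hDval]
  have hSsplit : (∑ k ∈ Finset.range (1 + m), (ε * x) ^ k / (Nat.factorial k))
      = (∑ k ∈ Finset.range m, (ε * x) ^ k / (Nat.factorial k)) + (ε * x) ^ m / (Nat.factorial m) := by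
    rw [add_comm 1 m, Finset.sum_range_succ]
  rw [hSsplit]
  simp only [Nat.add_sub_cancel_left]
  ring

lemma lap_interval (n : ℕ) (hn : 1 ≤ n) (ε : ℝ) (hε : 0 < ε) (R : ℝ) (hR : 0 ≤ R) :
    ∫ r in (0:ℝ)..R, r ^ (n - 1) * Real.exp (-ε * r)
      = (Nat.factorial (n - 1) : ℝ) / ε ^ n *
        (1 - Real.exp (-ε * R) * ∑ k ∈ Finset.range n, (ε * R) ^ k / (Nat.factorial k)) := by
  set C : ℝ := (Nat.factorial (n - 1) : ℝ) / ε ^ n with hC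
  have hderiv : ∀ x ∈ Set.uIcc (0:ℝ) R, HasDerivAt
      (fun x : ℝ => C * (1 - Real.exp (-ε * x) * ∑ k ∈ Finset.range n, (ε * x) ^ k / (Nat.factorial k)))
      (x ^ (n - 1) * Real.exp (-ε * x)) x := by
    intro x _
    have h := ((lap_deriv n hn ε x).const_sub 1).const_mul C
    convert h using 1
    · rfl
    · rfl
    have hfac : (Nat.factorial (n - 1) : ℝ) ≠ 0 := Nat.cast_ne_zero.mpr (Nat.factorial_ne_zero _)
    have hεn : ε ^ n ≠ 0 := pow_ne_zero _ hε.ne'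
    have hpow : ε ^ n = ε * ε ^ (n - 1) := by
      conv_lhs => rw [show n = 1 + (n - 1) by omega]
      rw [pow_add, pow_one]
    rw [hC]
    field_simp
    rw [mul_pow]
    ring_nf
    rw [hpow]
    ring
  rw [intervalIntegral.integral_eq_sub_of_hasDerivAt hderiv (by
    apply Continuous.intervalIntegrable; continuity)]
  have h0 : (∑ k ∈ Finset.range n, (0:ℝ) ^ k / (Nat.factorial k)) = 1 := by
    obtain ⟨m, rfl⟩ := Nat.exists_eq_add_of_le hn
    rw [add_comm 1 m, Finset.sum_range_succ']
    simp [zero_pow]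
  simp [h0]


/-- For `n ≥ 1`, `ε > 0` and `R ≥ 0`, the integral over the closed Euclidean
ball of radius `R` in `ℝ^n` of the `n`-dimensional Laplacian density `c_n^ε·exp(−ε‖x‖)`
equals `1 − exp(−εR) · Σ_{k=0}^{n−1} (εR)^k / k!`. -/
theorem laplacian_ball_probability (n : ℕ) (hn : 1 ≤ n) (ε : ℝ) (hε : 0 < ε)
    (R : ℝ) (hR : 0 ≤ R) :
    ∫ x in Metric.closedBall (0 : EuclideanSpace ℝ (Fin n)) R,
        lapConst n ε * Real.exp (-ε * ‖x‖) =
      1 - Real.exp (-ε * R) * ∑ k ∈ Finset.range n, (ε * R) ^ k / (Nat.factorial k) := by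
  haveI : Nonempty (Fin n) := ⟨⟨0, hn⟩⟩
  set c := lapConst n ε with hc
  set g : ℝ → ℝ := Set.indicator (Set.Iic R) (fun r => c * Real.exp (-ε * r)) with hg
  have hind : ∀ x : EuclideanSpace ℝ (Fin n),
      (Metric.closedBall (0 : EuclideanSpace ℝ (Fin n)) R).indicator
        (fun x => c * Real.exp (-ε * ‖x‖)) x = g ‖x‖ := by
    intro x
    by_cases h : ‖x‖ ≤ R <;>
      simp [hg, Set.indicator, Metric.mem_closedBall, dist_zero_right, h]
  rw [← MeasureTheory.integral_indicator measurableSet_closedBall]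
  simp_rw [hind]
  rw [integral_fun_norm_addHaar volume g]
  have hdim : Module.finrank ℝ (EuclideanSpace ℝ (Fin n)) = n := by
    simp [finrank_euclideanSpace]
  rw [hdim]
  have hI : ∫ y in Set.Ioi (0:ℝ), y ^ (n - 1) • g y
      = c * ((Nat.factorial (n - 1) : ℝ) / ε ^ n *
        (1 - Real.exp (-ε * R) * ∑ k ∈ Finset.range n, (ε * R) ^ k / (Nat.factorial k))) := by
    have h1 : ∀ y : ℝ, y ^ (n - 1) • g y
        = Set.indicator (Set.Iic R) (fun y => c * (y ^ (n - 1) * Real.exp (-ε * y))) y := by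
      intro y
      by_cases h : y ≤ R <;> simp [hg, Set.indicator, h] <;> ring
    simp_rw [h1]
    rw [setIntegral_indicator measurableSet_Iic, Set.Ioi_inter_Iic,
      ← intervalIntegral.integral_of_le hR, intervalIntegral.integral_const_mul,
      lap_interval n hn ε hε R hR]
  rw [hI]
  have hvol : (volume (Metric.ball (0 : EuclideanSpace ℝ (Fin n)) 1)).toReal
      = Real.sqrt π ^ n / Real.Gamma ((n : ℝ) / 2 + 1) := by
    rw [EuclideanSpace.volume_ball]
    rw [Fintype.card_fin]
    rw [ENNReal.toReal_mul, ← ENNReal.ofReal_pow zero_le_one, one_pow,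
      ENNReal.toReal_ofReal (by positivity), ENNReal.toReal_ofReal (by positivity), one_mul]
  rw [measureReal_def, hvol, nsmul_eq_mul, smul_eq_mul]
  have hΓpos : 0 < Real.Gamma ((n : ℝ) / 2 + 1) := Real.Gamma_pos_of_pos (by positivity)
  have hΓn : Real.Gamma (n : ℝ) = (Nat.factorial (n - 1) : ℝ) := by
    rw [show ((n : ℝ)) = (((n - 1 : ℕ) : ℝ) + 1) by
      push_cast [Nat.cast_sub hn]; ring]
    exact Real.Gamma_nat_eq_factorial (n - 1)
  have hsqrt : Real.sqrt π ^ n = π ^ ((n : ℝ) / 2) := by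
    rw [Real.sqrt_eq_rpow, ← Real.rpow_natCast (π ^ (1/2:ℝ)) n, ← Real.rpow_mul pi_pos.le]
    norm_num
    congr 1
    ring
  rw [hsqrt, hc]
  unfold lapConst
  rw [hΓn]
  have h1 : (Nat.factorial (n - 1) : ℝ) ≠ 0 := Nat.cast_ne_zero.mpr (Nat.factorial_ne_zero _)
  have h2 : (ε : ℝ) ^ n ≠ 0 := pow_ne_zero _ hε.ne'
  have h3 : (0:ℝ) < π ^ ((n : ℝ) / 2) := Real.rpow_pos_of_pos pi_pos _
  have h4 : (n : ℝ) ≠ 0 := Nat.cast_ne_zero.mpr (by omega)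
  field_simp
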